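/- Let H be an infinite-dimensional complex Hilbert space and let a ∈ B(H) be positive, invertible, with ‖a‖ = 1 and s(a) ≠ 0. Then a positive invertible x ∈ B(H) with ‖x‖ = 1 satisfies ‖x - p‖ = 1 for every co-minimal projection p with ‖a - p‖ = 1, if and only if s(a) ≤ x. -/

import Mathlib

variable {H : Type*} [NormedAddCommGroup H] [InnerProductSpace ℂ H] [CompleteSpace H]

/-- The support projection of `a ∈ B(H)`: the orthogonal projection onto the eigenspace
`ker (a - 1)` of `a` for the eigenvalue `1`. -/
noncomputable def supportProjection (a : H →L[ℂ] H) : H →L[ℂ] H :=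
  haveI : CompleteSpace (LinearMap.ker ((a - 1 : H →L[ℂ] H) : H →ₗ[ℂ] H)) :=
    (ContinuousLinearMap.isClosed_ker (a - 1)).completeSpace_coe
  (LinearMap.ker ((a - 1 : H →L[ℂ] H) : H →ₗ[ℂ] H)).subtypeL ∘L Submodule.orthogonalProjectionOnto (LinearMap.ker ((a - 1 : H →L[ℂ] H) : H →ₗ[ℂ] H))

set_option synthInstance.maxHeartbeats 400000
set_option maxHeartbeats 1000000

open ContinuousLinearMap

local notation "⟪" x ", " y "⟫" => @inner ℂ _ _ x y

/-- A selfadjoint operator between `-1` and `1` has norm at most one. -/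
lemma aux_norm_le_one {t : H →L[ℂ] H} (ht : IsSelfAdjoint t) (h1 : -1 ≤ t) (h2 : t ≤ 1) :
    ‖t‖ ≤ 1 := by
  rcases subsingleton_or_nontrivial (H →L[ℂ] H) with hH | hH
  · simp [Subsingleton.elim t 0]
  by_contra hc
  push_neg at hc
  rcases CStarAlgebra.norm_or_neg_norm_mem_spectrum ht with hm | hm
  · have h0 : (0 : H →L[ℂ] H) ≤ 1 - t := sub_nonneg.mpr h2
    have hmem : (1 : ℝ) - ‖t‖ ∈ spectrum ℝ ((1 : H →L[ℂ] H) - t) := by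
      rw [← map_one (algebraMap ℝ (H →L[ℂ] H)), ← spectrum.singleton_sub_eq]
      exact Set.sub_mem_sub rfl hm
    have := spectrum_nonneg_of_nonneg h0 hmem
    linarith
  · have h0 : (0 : H →L[ℂ] H) ≤ 1 + t := by
      have := sub_nonneg.mpr h1
      simpa [sub_neg_eq_add, add_comm] using this
    have hmem : (1 : ℝ) + -‖t‖ ∈ spectrum ℝ ((1 : H →L[ℂ] H) + t) := by
      rw [← map_one (algebraMap ℝ (H →L[ℂ] H)), ← spectrum.singleton_add_eq]
      exact Set.add_mem_add rfl hm
    have := spectrum_nonneg_of_nonneg h0 hmem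
    linarith

/-- For a positive operator, vanishing of the quadratic form at a vector implies the
vector is in the kernel. -/
lemma aux_inner_zero {b : H →L[ℂ] H} (hb : 0 ≤ b) {v : H}
    (hv : RCLike.re ⟪b v, v⟫ = 0) : b v = 0 := by
  have hs : 0 ≤ CFC.sqrt b := CFC.sqrt_nonneg (a := b)
  have hss : CFC.sqrt b * CFC.sqrt b = b := CFC.sqrt_mul_sqrt_self b hb
  have hsa : IsSelfAdjoint (CFC.sqrt b) := .of_nonneg hs
  have key : ⟪b v, v⟫ = ⟪CFC.sqrt b v, CFC.sqrt b v⟫ := by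
    conv_lhs => rw [← hss, mul_apply_eq_comp]
    nth_rw 1 [← (isSelfAdjoint_iff'.mp hsa)]
    exact adjoint_inner_left _ _ _
  have hsv : CFC.sqrt b v = 0 := by
    have : ‖CFC.sqrt b v‖ ^ 2 = 0 := by
      rw [← inner_self_eq_norm_sq (𝕜 := ℂ), ← key, hv]
    simpa using this
  have : b v = CFC.sqrt b (CFC.sqrt b v) := by
    conv_lhs => rw [← hss, mul_apply_eq_comp]
  rw [this, hsv, map_zero]

lemma aux_proj_nonneg {p : H →L[ℂ] H} (hp : IsIdempotentElem p) (hpa : IsSelfAdjoint p) :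
    0 ≤ p := by
  have : p = star p * p := by rw [hpa.star_eq]; exact hp.eq.symm
  rw [this]
  exact star_mul_self_nonneg p

lemma aux_exists_unit_vector {q : H →L[ℂ] H} (hq : IsIdempotentElem q)
    (hqa : IsSelfAdjoint q) (hr : Module.finrank ℂ (LinearMap.range (q : H →ₗ[ℂ] H)) = 1) :
    ∃ e : H, ‖e‖ = 1 ∧ (∀ ξ : H, q ξ = ⟪e, ξ⟫ • e) := by
  rw [finrank_eq_one_iff'] at hr
  obtain ⟨⟨v, hv⟩, hv0, hgen⟩ := hr
  have hvne : v ≠ 0 := fun h => hv0 (by simp [h])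
  set e : H := ((‖v‖ : ℂ))⁻¹ • v with he_def
  have he : ‖e‖ = 1 := by
    rw [he_def, norm_smul, norm_inv, Complex.norm_real, Real.norm_eq_abs,
      abs_of_nonneg (norm_nonneg v), inv_mul_cancel₀ (norm_ne_zero_iff.mpr hvne)]
  have hee : ⟪e, e⟫ = 1 := by
    rw [inner_self_eq_norm_sq_to_K, he]; norm_num
  have hmem : e ∈ LinearMap.range (q : H →ₗ[ℂ] H) := Submodule.smul_mem _ _ hv
  have hqe : q e = e := by
    obtain ⟨y, hy⟩ := hmem
    rw [ContinuousLinearMap.coe_coe] at hy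
    have := congrArg (fun f : H →L[ℂ] H => f y) hq.eq
    simp only [mul_apply_eq_comp] at this
    rw [← hy, this]
  refine ⟨e, he, fun ξ => ?_⟩
  -- q ξ is a multiple of e
  obtain ⟨c, hc⟩ := hgen ⟨q ξ, LinearMap.mem_range_self _ ξ⟩
  have hc' : q ξ = (c * (‖v‖ : ℂ)) • e := by
    have : c • v = q ξ := congrArg Subtype.val hc
    rw [← this, he_def, smul_smul, mul_assoc,
      mul_inv_cancel₀ (by exact_mod_cast norm_ne_zero_iff.mpr hvne), mul_one]
  have hsym := ContinuousLinearMap.isSelfAdjoint_iff_isSymmetric.mp hqa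
  have h1 : ⟪e, q ξ⟫ = ⟪e, ξ⟫ := by
    have := (hsym e ξ).symm
    simpa [hqe] using this
  rw [hc', inner_smul_right, hee, mul_one] at h1
  rw [hc', h1]

lemma aux_rankone {b : H →L[ℂ] H} (hb : 0 ≤ b) {e : H} (he : ‖e‖ = 1)
    {q : H →L[ℂ] H} (hq : ∀ ξ : H, q ξ = ⟪e, ξ⟫ • e)
    (hni : ¬ IsUnit (b + (1 - q))) : b e = 0 := by
  by_contra hbe
  apply hni
  have hs : 0 ≤ CFC.sqrt b := CFC.sqrt_nonneg (a := b)
  set s := CFC.sqrt b with hs_def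
  have hss : s * s = b := CFC.sqrt_mul_sqrt_self b hb
  have hsa : IsSelfAdjoint s := .of_nonneg hs
  have hb_eq : ∀ ξ : H, ⟪b ξ, ξ⟫ = ⟪s ξ, s ξ⟫ := by
    intro ξ
    conv_lhs => rw [← hss, mul_apply_eq_comp]
    nth_rw 1 [← (isSelfAdjoint_iff'.mp hsa)]
    exact adjoint_inner_left _ _ _
  have hee : ⟪e, e⟫ = 1 := by
    rw [inner_self_eq_norm_sq_to_K, he]; norm_num
  have hm : 0 < ‖s e‖ := by
    rcases eq_or_lt_of_le (norm_nonneg (s e)) with h0 | h0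
    · exfalso
      apply hbe
      have hse : s e = 0 := by rwa [eq_comm, norm_eq_zero] at h0
      have : b e = s (s e) := by conv_lhs => rw [← hss, mul_apply_eq_comp]
      rw [this, hse, map_zero]
    · exact h0
  set m := ‖s e‖ with hm_def
  set M := ‖s‖ with hM_def
  have hMpos : 0 < M := lt_of_lt_of_le hm (by simpa [he] using s.le_opNorm e)
  set c : ℝ := m ^ 2 / (4 * M ^ 2 + m ^ 2 + 4) with hc_def
  have hden : (0:ℝ) < 4 * M ^ 2 + m ^ 2 + 4 := by positivity
  have hc : 0 < c := by positivity
  apply ContinuousLinearMap.isUnit_of_forall_le_norm_inner_map _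
    (c := c.toNNReal) (by simpa using hc)
  intro ξ
  have hcoe : (c.toNNReal : ℝ) = c := Real.coe_toNNReal _ hc.le
  rw [hcoe]
  set d := ⟪e, ξ⟫ with hd_def
  set w := ξ - q ξ with hw_def
  have hqxi : q ξ = d • e := hq ξ
  have hξ : ξ = d • e + w := by rw [hw_def, hqxi]; abel
  have hew : ⟪e, w⟫ = 0 := by
    rw [hw_def, inner_sub_right, hqxi, inner_smul_right, hee, mul_one, ← hd_def, sub_self]
  have hwe : ⟪w, e⟫ = 0 := by rw [← inner_conj_symm, hew, map_zero]
  have hnorm : ‖ξ‖ ^ 2 = ‖d‖ ^ 2 + ‖w‖ ^ 2 := by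
    calc ‖ξ‖ ^ 2 = ‖d • e + w‖ ^ 2 := by rw [← hξ]
    _ = ‖d • e‖ ^ 2 + 2 * RCLike.re ⟪d • e, w⟫ + ‖w‖ ^ 2 := norm_add_sq _ _
    _ = ‖d‖ ^ 2 + ‖w‖ ^ 2 := by
        rw [inner_smul_left, hew, mul_zero, norm_smul, he, mul_one]
        simp
  have hsxi : s ξ = d • s e + s w := by
    conv_lhs => rw [hξ]
    rw [map_add, map_smul]
  have hlow : ‖d‖ * m - M * ‖w‖ ≤ ‖s ξ‖ := by
    have h1 : ‖d • s e‖ = ‖d‖ * m := by rw [norm_smul]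
    have h2 : ‖s w‖ ≤ M * ‖w‖ := s.le_opNorm w
    have h3 : ‖d • s e‖ ≤ ‖s ξ‖ + ‖s w‖ := by
      have h4 : d • s e = s ξ - s w := by rw [hsxi]; abel
      rw [h4]
      exact norm_sub_le _ _
    linarith
  have hform : RCLike.re ⟪(b + (1 - q)) ξ, ξ⟫ = ‖s ξ‖ ^ 2 + ‖w‖ ^ 2 := by
    have happ : (b + (1 - q)) ξ = b ξ + w := by
      simp [hw_def, ContinuousLinearMap.add_apply, ContinuousLinearMap.sub_apply]
    rw [happ, inner_add_left, hb_eq]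
    have hwx : ⟪w, ξ⟫ = ⟪w, w⟫ := by
      conv_lhs => rw [hξ]
      rw [inner_add_right, inner_smul_right, hwe, mul_zero, zero_add]
    rw [hwx, map_add, inner_self_eq_norm_sq, inner_self_eq_norm_sq]
  have hmain : ‖ξ‖ ^ 2 * c ≤ ‖s ξ‖ ^ 2 + ‖w‖ ^ 2 := by
    rw [hnorm, hc_def]
    set D := ‖d‖ with hD_def
    set W := ‖w‖ with hW_def
    set S := ‖s ξ‖ with hS_def
    have hD0 : 0 ≤ D := norm_nonneg _
    have hW0 : 0 ≤ W := norm_nonneg _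
    have hS0 : 0 ≤ S := norm_nonneg _
    rw [mul_div_assoc', div_le_iff₀ hden]
    rcases le_or_gt (m * D) (2 * M * W) with hcase | hcase
    · nlinarith [sq_nonneg S, mul_le_mul hcase hcase (by positivity) (by positivity),
        sq_nonneg W, sq_nonneg (M * W), hm.le, hMpos.le]
    · have h1 : 0 ≤ m * D - M * W := by nlinarith [mul_nonneg hMpos.le hW0]
      have h2 : m * D - M * W ≤ S := by linarith [hlow]
      have h3 : (m * D - M * W) ^ 2 ≤ S ^ 2 := by nlinarith
      have h4 : 0 ≤ (m * D - 2 * M * W) * (3 * (m * D) - 2 * (M * W)) := by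
        nlinarith [mul_nonneg hMpos.le hW0]
      nlinarith [sq_nonneg W, h3, h4, hm.le]
  calc ‖ξ‖ ^ 2 * c ≤ ‖s ξ‖ ^ 2 + ‖w‖ ^ 2 := hmain
  _ = RCLike.re ⟪(b + (1 - q)) ξ, ξ⟫ := hform.symm
  _ ≤ ‖⟪(b + (1 - q)) ξ, ξ⟫‖ := RCLike.re_le_norm _

/-- Let `H` be infinite-dimensional and `a ∈ B(H)` positive invertible with `‖a‖ = 1` and
`s(a) ≠ 0`.  A positive invertible `x` with `‖x‖ = 1` satisfies `‖x - p‖ = 1` for every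
co-minimal projection `p` with `‖a - p‖ = 1` iff `s(a) ≤ x`. -/
theorem sph_sph_cominimal_iff (hinf : ¬ FiniteDimensional ℂ H) (a x : H →L[ℂ] H)
    (ha : 0 ≤ a) (hua : IsUnit a) (hna : ‖a‖ = 1) (hs : supportProjection a ≠ 0)
    (hx : 0 ≤ x) (hux : IsUnit x) (hnx : ‖x‖ = 1) :
    (∀ p : H →L[ℂ] H, IsIdempotentElem p → IsSelfAdjoint p →
        Module.finrank ℂ (LinearMap.range ((1 - p : H →L[ℂ] H) : H →ₗ[ℂ] H)) = 1 → ‖a - p‖ = 1 → ‖x - p‖ = 1) ↔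
      supportProjection a ≤ x := by
  haveI hKc : CompleteSpace (LinearMap.ker ((a - 1 : H →L[ℂ] H) : H →ₗ[ℂ] H)) :=
    (ContinuousLinearMap.isClosed_ker (a - 1)).completeSpace_coe
  have hs_apply : ∀ ξ : H,
      supportProjection a ξ = (Submodule.orthogonalProjectionOnto (LinearMap.ker ((a - 1 : H →L[ℂ] H) : H →ₗ[ℂ] H)) ξ : H) :=
    fun _ => rfl
  have hntA : Nontrivial (H →L[ℂ] H) := ⟨⟨supportProjection a, 0, hs⟩⟩
  have hsa_a : IsSelfAdjoint a := .of_nonneg ha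
  have hsa_x : IsSelfAdjoint x := .of_nonneg hx
  have ha1 : a ≤ 1 := (CStarAlgebra.norm_le_one_iff_of_nonneg a ha).mp hna.le
  have hx1 : x ≤ 1 := (CStarAlgebra.norm_le_one_iff_of_nonneg x hx).mp hnx.le
  have hs_sa : IsSelfAdjoint (supportProjection a) :=
    isSelfAdjoint_starProjection (LinearMap.ker ((a - 1 : H →L[ℂ] H) : H →ₗ[ℂ] H))
  have hmemK : ∀ ξ : H, ξ ∈ LinearMap.ker ((a - 1 : H →L[ℂ] H) : H →ₗ[ℂ] H) ↔ a ξ = ξ := by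
    intro ξ
    rw [LinearMap.mem_ker, ContinuousLinearMap.coe_coe, ContinuousLinearMap.sub_apply, ContinuousLinearMap.one_apply,
      sub_eq_zero]
  constructor
  · intro h
    have hfix : ∀ ξ : H, ξ ∈ LinearMap.ker ((a - 1 : H →L[ℂ] H) : H →ₗ[ℂ] H) → x ξ = ξ := by
      intro ξ hξ
      rcases eq_or_ne ξ 0 with rfl | hξ0
      · simp
      have hnz : (‖ξ‖ : ℂ) ≠ 0 := by exact_mod_cast norm_ne_zero_iff.mpr hξ0
      set e : H := ((‖ξ‖ : ℂ))⁻¹ • ξ with he_def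
      have he : ‖e‖ = 1 := by
        rw [he_def, norm_smul, norm_inv, Complex.norm_real, Real.norm_eq_abs,
          abs_of_nonneg (norm_nonneg ξ), inv_mul_cancel₀ (norm_ne_zero_iff.mpr hξ0)]
      have hene : e ≠ 0 := by
        intro h0; rw [h0, norm_zero] at he; norm_num at he
      have hee : ⟪e, e⟫ = 1 := by
        rw [inner_self_eq_norm_sq_to_K, he]; norm_num
      have hae : a e = e := by rw [he_def, map_smul, (hmemK ξ).mp hξ]
      set q : H →L[ℂ] H :=
        (ContinuousLinearMap.toSpanSingleton ℂ e).comp (innerSL ℂ e) with hq_def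
      have hq_apply : ∀ η : H, q η = ⟪e, η⟫ • e := fun η => rfl
      have hq_idem : IsIdempotentElem q := by
        rw [IsIdempotentElem]
        ext η
        rw [mul_apply_eq_comp, hq_apply, hq_apply, inner_smul_right, hee, mul_one]
      have hq_sa : IsSelfAdjoint q := by
        rw [ContinuousLinearMap.isSelfAdjoint_iff_isSymmetric]
        intro u v
        show ⟪q u, v⟫ = ⟪u, q v⟫
        rw [hq_apply, hq_apply, inner_smul_left, inner_smul_right, inner_conj_symm]
        ring
      have hq0 : 0 ≤ q := aux_proj_nonneg hq_idem hq_sa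
      set p : H →L[ℂ] H := 1 - q with hp_def
      have hp_idem : IsIdempotentElem p := hq_idem.one_sub
      have hp_sa : IsSelfAdjoint p := (IsSelfAdjoint.one (H →L[ℂ] H)).sub hq_sa
      have hp0 : 0 ≤ p := aux_proj_nonneg hp_idem hp_sa
      have hp1 : p ≤ 1 := by
        rw [hp_def]
        exact sub_le_self 1 hq0
      have hqe : q e = e := by rw [hq_apply, hee, one_smul]
      have hpe : p e = 0 := by
        rw [hp_def, ContinuousLinearMap.sub_apply, ContinuousLinearMap.one_apply, hqe, sub_self]
      have hfr : Module.finrank ℂ (LinearMap.range ((1 - p : H →L[ℂ] H) : H →ₗ[ℂ] H)) = 1 := by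
        have hrange : LinearMap.range ((1 - p : H →L[ℂ] H) : H →ₗ[ℂ] H) = (Submodule.span ℂ {e}) := by
          rw [hp_def, sub_sub_cancel]
          apply le_antisymm
          · rintro η ⟨ζ, rfl⟩
            rw [ContinuousLinearMap.coe_coe, hq_apply]
            exact Submodule.smul_mem _ _ (Submodule.mem_span_singleton_self e)
          · rw [Submodule.span_le, Set.singleton_subset_iff]
            exact ⟨e, hqe⟩
        rw [hrange]
        exact finrank_span_singleton hene
      have hap1 : ‖a - p‖ = 1 := by
        have hle1 : ‖a - p‖ ≤ 1 := by
          apply aux_norm_le_one (hsa_a.sub hp_sa)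
          · calc (-1 : H →L[ℂ] H) = 0 - 1 := by abel
            _ ≤ a - p := sub_le_sub ha hp1
          · exact (sub_le_self a hp0).trans ha1
        have hge1 : 1 ≤ ‖a - p‖ := by
          have h1 : (a - p) e = e := by
            rw [ContinuousLinearMap.sub_apply, hae, hpe, sub_zero]
          have h2 := (a - p).le_opNorm e
          rw [h1, he] at h2
          simpa using h2
        linarith
      have hxp := h p hp_idem hp_sa hfr hap1
      have hsa_xp : IsSelfAdjoint (x - p) := hsa_x.sub hp_sa
      have hxe : x e = e := by
        rcases CStarAlgebra.norm_or_neg_norm_mem_spectrum hsa_xp with hmem | hmem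
        · rw [hxp] at hmem
          have hni : ¬ IsUnit ((1 - x) + (1 - q)) := by
            have heq : (algebraMap ℝ (H →L[ℂ] H)) 1 - (x - p) = (1 - x) + (1 - q) := by
              rw [map_one, hp_def]; abel
            rw [← heq]
            exact spectrum.mem_iff.mp hmem
          have h0 := aux_rankone (sub_nonneg.mpr hx1) he hq_apply hni
          have h1 : e - x e = 0 := by
            simpa [ContinuousLinearMap.sub_apply, ContinuousLinearMap.one_apply] using h0
          rw [sub_eq_zero] at h1
          exact h1.symm
        · exfalso
          rw [hxp] at hmem
          have hu : IsUnit (x + q) :=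
            CStarAlgebra.isUnit_of_le x (le_add_of_nonneg_right hq0) ⟨hx, hux⟩
          have heq : (algebraMap ℝ (H →L[ℂ] H)) (-1) - (x - p) = -(x + q) := by
            rw [map_neg, map_one, hp_def]; abel
          exact spectrum.mem_iff.mp hmem (heq ▸ hu.neg)
      have h7 : x e = (‖ξ‖ : ℂ)⁻¹ • x ξ := by rw [he_def, map_smul]
      rw [h7, he_def] at hxe
      exact smul_right_injective H (inv_ne_zero hnz) hxe
    have h1 : x * supportProjection a = supportProjection a := by
      ext ξ
      rw [mul_apply_eq_comp]
      exact hfix _ (by rw [hs_apply]; exact SetLike.coe_mem _)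
    have h2 : supportProjection a * x = supportProjection a := by
      have h3 := congrArg star h1
      rwa [star_mul, hs_sa.star_eq, hsa_x.star_eq] at h3
    have h3 : supportProjection a * supportProjection a = supportProjection a := by
      ext ξ
      rw [mul_apply_eq_comp, hs_apply ξ, hs_apply]
      congr 1
      exact Submodule.orthogonalProjectionOnto_mem_subspace_eq_self _
    have key : x - supportProjection a
        = star (1 - supportProjection a) * x * (1 - supportProjection a) := by
      rw [star_sub, star_one, hs_sa.star_eq]
      have expand : (1 - supportProjection a) * x * (1 - supportProjection a)
          = x - supportProjection a * x - x * supportProjection a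
            + supportProjection a * x * supportProjection a := by noncomm_ring
      rw [expand, h2, h1, h3]
      abel
    rw [← sub_nonneg, key]
    exact star_left_conjugate_nonneg hx _
  · intro hle p hp_idem hp_sa hpr hap
    have hq_idem : IsIdempotentElem (1 - p) := hp_idem.one_sub
    have hq_sa : IsSelfAdjoint ((1 : H →L[ℂ] H) - p) :=
      (IsSelfAdjoint.one (H →L[ℂ] H)).sub hp_sa
    obtain ⟨e, he, hqe⟩ := aux_exists_unit_vector hq_idem hq_sa hpr
    have hee : ⟪e, e⟫ = 1 := by
      rw [inner_self_eq_norm_sq_to_K, he]; norm_num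
    have hq0 : 0 ≤ (1 : H →L[ℂ] H) - p := aux_proj_nonneg hq_idem hq_sa
    have hp0 : 0 ≤ p := aux_proj_nonneg hp_idem hp_sa
    have hp1 : p ≤ 1 := sub_nonneg.mp hq0
    have hsa_ap : IsSelfAdjoint (a - p) := hsa_a.sub hp_sa
    have hae : a e = e := by
      rcases CStarAlgebra.norm_or_neg_norm_mem_spectrum hsa_ap with hmem | hmem
      · rw [hap] at hmem
        have hni : ¬ IsUnit ((1 - a) + (1 - (1 - p))) := by
          have heq : (algebraMap ℝ (H →L[ℂ] H)) 1 - (a - p) = (1 - a) + (1 - (1 - p)) := by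
            rw [map_one]; abel
          rw [← heq]
          exact spectrum.mem_iff.mp hmem
        have h0 := aux_rankone (sub_nonneg.mpr ha1) he hqe hni
        have h1 : e - a e = 0 := by
          simpa [ContinuousLinearMap.sub_apply, ContinuousLinearMap.one_apply] using h0
        rw [sub_eq_zero] at h1
        exact h1.symm
      · exfalso
        rw [hap] at hmem
        have hu : IsUnit (a + (1 - p)) :=
          CStarAlgebra.isUnit_of_le a (le_add_of_nonneg_right hq0) ⟨ha, hua⟩
        have heq : (algebraMap ℝ (H →L[ℂ] H)) (-1) - (a - p) = -(a + (1 - p)) := by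
          rw [map_neg, map_one]; abel
        exact spectrum.mem_iff.mp hmem (heq ▸ hu.neg)
    have heK : e ∈ LinearMap.ker ((a - 1 : H →L[ℂ] H) : H →ₗ[ℂ] H) := (hmemK e).mpr hae
    have hse : supportProjection a e = e := by
      rw [hs_apply]
      exact congrArg Subtype.val (Submodule.orthogonalProjectionOnto_mem_subspace_eq_self (⟨e, heK⟩ : LinearMap.ker ((a - 1 : H →L[ℂ] H) : H →ₗ[ℂ] H)))
    have hxe : x e = e := by
      have hle2 : (1 : H →L[ℂ] H) - x ≤ 1 - supportProjection a := sub_le_sub_left hle 1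
      have h1 := ((ContinuousLinearMap.nonneg_iff_isPositive _).mp
        (sub_nonneg.mpr hle2)).re_inner_nonneg_left e
      have h2 := ((ContinuousLinearMap.nonneg_iff_isPositive _).mp
        (sub_nonneg.mpr hx1)).re_inner_nonneg_left e
      have h3 : ((1 : H →L[ℂ] H) - supportProjection a) e = 0 := by
        rw [ContinuousLinearMap.sub_apply, ContinuousLinearMap.one_apply, hse, sub_self]
      have h4 : RCLike.re ⟪((1 : H →L[ℂ] H) - x) e, e⟫ = 0 := by
        have h5 : ((1 - supportProjection a) - (1 - x)) e
            = (0 : H) - ((1 : H →L[ℂ] H) - x) e := by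
          rw [ContinuousLinearMap.sub_apply, h3]
        rw [h5, zero_sub, inner_neg_left, map_neg] at h1
        have h6 : RCLike.re ⟪((1 : H →L[ℂ] H) - x) e, e⟫ ≤ 0 := by linarith
        exact le_antisymm h6 h2
      have h7 := aux_inner_zero (sub_nonneg.mpr hx1) h4
      have h8 : e - x e = 0 := by
        simpa [ContinuousLinearMap.sub_apply, ContinuousLinearMap.one_apply] using h7
      rw [sub_eq_zero] at h8
      exact h8.symm
    have hpe : p e = 0 := by
      have h1 : ((1 : H →L[ℂ] H) - p) e = e := by rw [hqe e, hee, one_smul]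
      rw [ContinuousLinearMap.sub_apply, ContinuousLinearMap.one_apply, sub_eq_self] at h1
      exact h1
    have hge : 1 ≤ ‖x - p‖ := by
      have h1 : (x - p) e = e := by
        rw [ContinuousLinearMap.sub_apply, hxe, hpe, sub_zero]
      have h2 := (x - p).le_opNorm e
      rw [h1, he] at h2
      simpa using h2
    have hle' : ‖x - p‖ ≤ 1 := by
      apply aux_norm_le_one (hsa_x.sub hp_sa)
      · calc (-1 : H →L[ℂ] H) = 0 - 1 := by abel
        _ ≤ x - p := sub_le_sub hx hp1
      · exact (sub_le_self x hp0).trans hx1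
    linarith
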